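/- Let q₀ ≥ ⋯ ≥ q_{n−1} be reals, m ≥ 1, n ≥ 2m+1, b > 0, and let w* = ẉ := (1/(n−m))·Σ_{h=m}^{n−1} q_h. If all m appended values equal q_{n−1} − b, then the m-trimmed mean of the resulting n+m values equals w*. -/

import Mathlib

open Finset

/-- Median of a multiset of reals: average of the two middle order statistics
(equal to the middle one for odd cardinality). -/
noncomputable def med (s : Multiset ℝ) : ℝ :=
  ((s.sort (· ≤ ·)).getD ((Multiset.card s - 1) / 2) 0 +
    (s.sort (· ≤ ·)).getD (Multiset.card s / 2) 0) / 2

/-- `m`-trimmed mean: remove the `m` largest and `m` smallest values and average the rest. -/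
noncomputable def trimmedMean (m : ℕ) (s : Multiset ℝ) : ℝ :=
  ((((s.sort (· ≤ ·)).drop m).take (Multiset.card s - 2 * m)).sum) /
    ((Multiset.card s : ℝ) - 2 * m)

/-- The multiset of the first `n` values of `q`. -/
noncomputable def qMs (n : ℕ) (q : ℕ → ℝ) : Multiset ℝ :=
  (Finset.range n).val.map q

theorem stmt13 (n m : ℕ) (hm : 1 ≤ m) (hn : 2 * m + 1 ≤ n) (q : ℕ → ℝ)
    (hq : ∀ i j, i ≤ j → j < n → q j ≤ q i) (b wstar : ℝ) (hb : 0 < b)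
    (hw : wstar = (∑ h ∈ Finset.Ico m n, q h) / ((n : ℝ) - m)) :
    trimmedMean m (qMs n q + Multiset.replicate m (q (n - 1) - b)) = wstar := by
  set s : Multiset ℝ := qMs n q + Multiset.replicate m (q (n - 1) - b) with hs
  set L : List ℝ := List.replicate m (q (n - 1) - b) ++ (List.range n).reverse.map q with hL
  have hmemq : ∀ x ∈ (List.range n).reverse.map q, ∃ j, j < n ∧ x = q j := by
    intro x hx
    simp only [List.mem_map, List.mem_reverse, List.mem_range] at hx
    obtain ⟨j, hj, rfl⟩ := hx
    exact ⟨j, hj, rfl⟩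
  have hlow : ∀ x ∈ (List.range n).reverse.map q, q (n - 1) - b ≤ x := by
    intro x hx
    obtain ⟨j, hj, rfl⟩ := hmemq x hx
    have : q (n - 1) ≤ q j := hq j (n - 1) (by omega) (by omega)
    linarith
  have hsortL : List.Pairwise (· ≤ ·) L := by
    rw [hL, List.pairwise_append]
    refine ⟨List.pairwise_replicate.2 (Or.inr le_rfl), ?_, ?_⟩
    · rw [List.pairwise_map, List.pairwise_reverse]
      have h1 : List.Pairwise (· < ·) (List.range n) := @List.pairwise_lt_range n
      refine h1.imp_of_mem ?_
      intro a c ha hc hac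
      exact hq a c hac.le (List.mem_range.1 hc)
    · intro a ha b' hb'
      have : a = q (n - 1) - b := List.eq_of_mem_replicate ha
      subst this
      exact hlow b' hb'
  have hperm : (s.sort (· ≤ ·) : Multiset ℝ) = (L : Multiset ℝ) := by
    rw [Multiset.sort_eq, hL]
    rw [hs, qMs, ← Multiset.coe_add, List.map_reverse, Multiset.coe_reverse]
    simp only [Finset.range, Multiset.range]
    rw [← Multiset.coe_replicate, Multiset.map_coe, Multiset.coe_add]
    exact Multiset.coe_eq_coe.2 List.perm_append_comm
  have hsort : s.sort (· ≤ ·) = L :=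
    List.Perm.eq_of_pairwise' (s.pairwise_sort _) hsortL (Multiset.coe_eq_coe.1 hperm)
  have hcard : Multiset.card s = n + m := by
    rw [hs, qMs]; simp
  have hdrop : L.drop m = (List.range n).reverse.map q := by
    rw [hL, List.drop_append_of_le_length (by simp)]
    simp
  have hrange : List.drop m (List.range n) = List.range' m (n - m) := by
    have h := @List.range'_append 0 m (n - m) 1
    simp only [zero_add, one_mul] at h
    have h2 : List.range n = List.range' 0 m ++ List.range' m (n - m) := by
      rw [h, List.range_eq_range']
      congr 1
      omega
    rw [h2, List.drop_append_of_le_length (by simp [List.length_range'])]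
    simp [List.length_range']
  have htake : ((List.range n).reverse.map q).take (n - m)
      = ((List.range' m (n - m)).reverse).map q := by
    rw [← List.map_take, List.take_reverse, List.length_range,
      show n - (n - m) = m from by omega, hrange]
  have hsum : (((List.range' m (n - m)).reverse).map q).sum = ∑ h ∈ Finset.Ico m n, q h := by
    rw [List.map_reverse, List.sum_reverse, List.range'_eq_map_range, List.map_map,
      Finset.sum_Ico_eq_sum_range]
    simp [Finset.sum, Finset.range, Multiset.range, Function.comp_def]
  rw [trimmedMean, hsort, hcard, hdrop, show n + m - 2 * m = n - m from by omega, htake, hsum, hw]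
  congr 1
  push_cast
  ring
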